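/- Let (X,d) be a compact metric space and f : X → X an expansive homeomorphism with the shadowing property and the specification property. Then f has the two-sided limit shadowing property. -/

import Mathlib

open Filter Topology

variable {X : Type*} [MetricSpace X]

/-- `f` is expansive, with some expansivity constant `ε > 0`. -/
def Expansive (f : X ≃ X) : Prop :=
  ∃ ε : ℝ, 0 < ε ∧ ∀ x y : X, (∀ n : ℤ, dist ((f ^ n) x) ((f ^ n) y) ≤ ε) → x = y

/-- The (two-sided) shadowing property for a bijection `f`. -/
def ShadowingPropertyZ (f : X ≃ X) : Prop :=
  ∀ ε : ℝ, 0 < ε → ∃ δ : ℝ, 0 < δ ∧ ∀ x : ℤ → X,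
    (∀ i : ℤ, dist (f (x i)) (x (i + 1)) < δ) →
    ∃ y : X, ∀ i : ℤ, dist ((f ^ i) y) (x i) < ε

/-- The specification property. -/
def SpecificationProperty (f : X ≃ X) : Prop :=
  ∀ ε : ℝ, 0 < ε → ∃ L : ℕ, ∀ m : ℕ, ∀ a b : Fin (m + 1) → ℤ,
    (∀ i, a i ≤ b i) →
    (∀ i : Fin m, b i.castSucc < a i.succ) →
    (∀ i : Fin m, b i.castSucc + (L : ℤ) ≤ a i.succ) →
    ∀ P : ℤ → X,
      (∀ i : Fin (m + 1), ∀ t₁ ∈ Set.Icc (a i) (b i), ∀ t₂ ∈ Set.Icc (a i) (b i),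
        (f ^ (t₂ - t₁)) (P t₁) = P t₂) →
      ∃ y : X, ∀ i : Fin (m + 1), ∀ t ∈ Set.Icc (a i) (b i), dist ((f ^ t) y) (P t) < ε

/-- A two-sided limit pseudo-orbit: `d(f(x i), x (i+1)) → 0` as `|i| → ∞`. -/
def IsTwoSidedLimitPseudoOrbit (f : X ≃ X) (x : ℤ → X) : Prop :=
  Tendsto (fun i : ℤ => dist (f (x i)) (x (i + 1))) cofinite (𝓝 0)

/-- `f` has the two-sided limit shadowing property. -/
def TwoSidedLimitShadowing (f : X ≃ X) : Prop :=
  ∀ x : ℤ → X, IsTwoSidedLimitPseudoOrbit f x →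
    ∃ y : X, Tendsto (fun i : ℤ => dist ((f ^ i) y) (x i)) cofinite (𝓝 0)

lemma zpow_add_apply' (g : X ≃ X) (m n : ℤ) (x : X) :
    (g ^ (m + n)) x = (g ^ m) ((g ^ n) x) := by
  rw [zpow_add]; rfl

lemma cont_zpow (f : X ≃ₜ X) (n : ℤ) : Continuous fun x => (f.toEquiv ^ n) x := by
  induction n using Int.induction_on with
  | zero => simpa using continuous_id'
  | succ k ih =>
      have h : ∀ x : X, (f.toEquiv ^ ((k : ℤ) + 1)) x = (f.toEquiv ^ (k : ℤ)) (f x) := by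
        intro x
        rw [zpow_add_apply' f.toEquiv (k:ℤ) 1]
        simp
      simpa only [h, Function.comp_def] using ih.comp f.continuous
  | pred k ih =>
      have h : ∀ x : X, (f.toEquiv ^ (-(k : ℤ) - 1)) x = (f.toEquiv ^ (-(k : ℤ))) (f.symm x) := by
        intro x
        rw [sub_eq_add_neg, zpow_add_apply']
        rfl
      simpa only [h, Function.comp_def] using ih.comp f.symm.continuous

lemma tendsto_zero_of_small {α : Type*} {l : Filter α} {g : α → ℝ}
    (h0 : ∀ i, 0 ≤ g i) (h : ∀ c : ℝ, 0 < c → ∀ᶠ i in l, g i < c) :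
    Tendsto g l (𝓝 0) := by
  rw [Metric.tendsto_nhds]
  intro c hc
  filter_upwards [h c hc] with i hi
  rw [Real.dist_eq, sub_zero, abs_of_nonneg (h0 i)]
  exact hi

lemma asymp_forward [CompactSpace X] (f : X ≃ₜ X) {ε : ℝ} (hε : 0 < ε)
    (hexp : ∀ x y : X, (∀ n : ℤ, dist ((f.toEquiv ^ n) x) ((f.toEquiv ^ n) y) ≤ ε) → x = y)
    (a b : X) (T : ℤ) (hab : ∀ k : ℤ, T ≤ k → dist ((f.toEquiv ^ k) a) ((f.toEquiv ^ k) b) ≤ ε) :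
    Tendsto (fun k : ℤ => dist ((f.toEquiv ^ k) a) ((f.toEquiv ^ k) b)) atTop (𝓝 0) := by
  by_contra h
  have h2 : ∃ c : ℝ, 0 < c ∧ ∃ᶠ k in (atTop : Filter ℤ),
      c ≤ dist ((f.toEquiv ^ k) a) ((f.toEquiv ^ k) b) := by
    rw [Metric.tendsto_nhds] at h
    push_neg at h
    obtain ⟨c, hc, hfreq⟩ := h
    refine ⟨c, hc, ?_⟩
    refine hfreq.mono fun k hk => ?_
    rw [Real.dist_eq, sub_zero, abs_of_nonneg dist_nonneg] at hk
    exact hk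
  obtain ⟨c, hc, hfreq⟩ := h2
  rw [Filter.frequently_atTop] at hfreq
  choose k hk1 hk2 using fun j : ℕ => hfreq (j : ℤ)
  set u : ℕ → X × X := fun j => ((f.toEquiv ^ k j) a, (f.toEquiv ^ k j) b) with hu
  obtain ⟨⟨A, B⟩, -, φ, hφ, hconv⟩ :=
    IsCompact.tendsto_subseq (isCompact_univ (X := X × X)) (fun n => Set.mem_univ (u n))
  have hA : Tendsto (fun j => (u (φ j)).1) atTop (𝓝 A) :=
    (continuous_fst.tendsto (A, B)).comp hconv
  have hB : Tendsto (fun j => (u (φ j)).2) atTop (𝓝 B) :=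
    (continuous_snd.tendsto (A, B)).comp hconv
  have hkey : ∀ m : ℤ, dist ((f.toEquiv ^ m) A) ((f.toEquiv ^ m) B) ≤ ε := by
    intro m
    have hAm : Tendsto (fun j => (f.toEquiv ^ m) (u (φ j)).1) atTop (𝓝 ((f.toEquiv ^ m) A)) :=
      ((cont_zpow f m).tendsto A).comp hA
    have hBm : Tendsto (fun j => (f.toEquiv ^ m) (u (φ j)).2) atTop (𝓝 ((f.toEquiv ^ m) B)) :=
      ((cont_zpow f m).tendsto B).comp hB
    refine le_of_tendsto (hAm.dist hBm) ?_
    filter_upwards [eventually_ge_atTop (T - m).toNat] with j hj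
    have hj2 : T ≤ m + k (φ j) := by
      have h1 : (j : ℤ) ≤ k (φ j) := le_trans (by exact_mod_cast hφ.le_apply) (hk1 (φ j))
      have h3 : ((T - m).toNat : ℤ) ≤ (j : ℤ) := by exact_mod_cast hj
      have := Int.self_le_toNat (T - m)
      omega
    have := hab (m + k (φ j)) hj2
    simpa only [hu, zpow_add_apply'] using this
  have hAB : A = B := hexp A B hkey
  have hge : c ≤ dist A B :=
    ge_of_tendsto (hA.dist hB) (Eventually.of_forall fun j => hk2 (φ j))
  rw [hAB, dist_self] at hge
  exact absurd hge (not_le.mpr hc)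

lemma asymp_backward [CompactSpace X] (f : X ≃ₜ X) {ε : ℝ} (hε : 0 < ε)
    (hexp : ∀ x y : X, (∀ n : ℤ, dist ((f.toEquiv ^ n) x) ((f.toEquiv ^ n) y) ≤ ε) → x = y)
    (a b : X) (T : ℤ) (hab : ∀ k : ℤ, k ≤ T → dist ((f.toEquiv ^ k) a) ((f.toEquiv ^ k) b) ≤ ε) :
    Tendsto (fun k : ℤ => dist ((f.toEquiv ^ k) a) ((f.toEquiv ^ k) b)) atBot (𝓝 0) := by
  by_contra h
  have h2 : ∃ c : ℝ, 0 < c ∧ ∃ᶠ k in (atBot : Filter ℤ),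
      c ≤ dist ((f.toEquiv ^ k) a) ((f.toEquiv ^ k) b) := by
    rw [Metric.tendsto_nhds] at h
    push_neg at h
    obtain ⟨c, hc, hfreq⟩ := h
    refine ⟨c, hc, ?_⟩
    refine hfreq.mono fun k hk => ?_
    rw [Real.dist_eq, sub_zero, abs_of_nonneg dist_nonneg] at hk
    exact hk
  obtain ⟨c, hc, hfreq⟩ := h2
  rw [Filter.frequently_atBot] at hfreq
  choose k hk1 hk2 using fun j : ℕ => hfreq (-(j : ℤ))
  set u : ℕ → X × X := fun j => ((f.toEquiv ^ k j) a, (f.toEquiv ^ k j) b) with hu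
  obtain ⟨⟨A, B⟩, -, φ, hφ, hconv⟩ :=
    IsCompact.tendsto_subseq (isCompact_univ (X := X × X)) (fun n => Set.mem_univ (u n))
  have hA : Tendsto (fun j => (u (φ j)).1) atTop (𝓝 A) :=
    (continuous_fst.tendsto (A, B)).comp hconv
  have hB : Tendsto (fun j => (u (φ j)).2) atTop (𝓝 B) :=
    (continuous_snd.tendsto (A, B)).comp hconv
  have hkey : ∀ m : ℤ, dist ((f.toEquiv ^ m) A) ((f.toEquiv ^ m) B) ≤ ε := by
    intro m
    have hAm : Tendsto (fun j => (f.toEquiv ^ m) (u (φ j)).1) atTop (𝓝 ((f.toEquiv ^ m) A)) :=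
      ((cont_zpow f m).tendsto A).comp hA
    have hBm : Tendsto (fun j => (f.toEquiv ^ m) (u (φ j)).2) atTop (𝓝 ((f.toEquiv ^ m) B)) :=
      ((cont_zpow f m).tendsto B).comp hB
    refine le_of_tendsto (hAm.dist hBm) ?_
    filter_upwards [eventually_ge_atTop (m - T).toNat] with j hj
    have hj2 : m + k (φ j) ≤ T := by
      have h1 : k (φ j) ≤ -(φ j : ℤ) := hk1 (φ j)
      have h4 : (j : ℤ) ≤ (φ j : ℤ) := by exact_mod_cast hφ.le_apply
      have h3 : ((m - T).toNat : ℤ) ≤ (j : ℤ) := by exact_mod_cast hj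
      have := Int.self_le_toNat (m - T)
      omega
    have := hab (m + k (φ j)) hj2
    simpa only [hu, zpow_add_apply'] using this
  have hAB : A = B := hexp A B hkey
  have hge : c ≤ dist A B :=
    ge_of_tendsto (hA.dist hB) (Eventually.of_forall fun j => hk2 (φ j))
  rw [hAB, dist_self] at hge
  exact absurd hge (not_le.mpr hc)

lemma tail_bounds {g : ℤ → ℝ} (hx : Tendsto g cofinite (𝓝 0)) {δ : ℝ} (hδ : 0 < δ) :
    ∃ N : ℤ, (∀ i : ℤ, N ≤ i → g i < δ) ∧ (∀ i : ℤ, i ≤ -N → g i < δ) := by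
  have h1 : ∀ᶠ i in (cofinite : Filter ℤ), g i < δ := hx.eventually_lt_const hδ
  rw [Int.cofinite_eq, eventually_sup, eventually_atBot, eventually_atTop] at h1
  obtain ⟨⟨M₁, hM₁⟩, M₂, hM₂⟩ := h1
  refine ⟨max M₂ (-M₁), fun i hi => hM₂ i (le_trans (le_max_left _ _) hi),
    fun i hi => hM₁ i ?_⟩
  have := le_max_right M₂ (-M₁)
  omega

lemma forward_shadow (f : X ≃ₜ X) (hsh : ShadowingPropertyZ f.toEquiv) (x : ℤ → X)
    (hx : Tendsto (fun i : ℤ => dist (f.toEquiv (x i)) (x (i + 1))) cofinite (𝓝 0))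
    {ε' : ℝ} (hε' : 0 < ε') :
    ∃ N : ℤ, ∃ p : X, ∀ i : ℤ, N ≤ i → dist ((f.toEquiv ^ i) p) (x i) < ε' := by
  obtain ⟨δ, hδ, hδsh⟩ := hsh ε' hε'
  obtain ⟨N, hN, -⟩ := tail_bounds hx hδ
  set z : ℤ → X := fun i => if N ≤ i then x i else (f.toEquiv ^ (i - N)) (x N) with hz
  have hpo : ∀ i : ℤ, dist (f.toEquiv (z i)) (z (i + 1)) < δ := by
    intro i
    by_cases hi : N ≤ i
    · have h1 : z i = x i := if_pos hi
      have h2 : z (i + 1) = x (i + 1) := if_pos (by omega)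
      rw [h1, h2]
      exact hN i hi
    · have h1 : z i = (f.toEquiv ^ (i - N)) (x N) := if_neg hi
      have h2 : z (i + 1) = (f.toEquiv ^ (i + 1 - N)) (x N) := by
        by_cases hi2 : N ≤ i + 1
        · have h3 : i + 1 = N := by omega
          rw [hz]
          simp only [if_pos hi2, h3]
          simp
        · exact if_neg hi2
      have h4 : f.toEquiv (z i) = z (i + 1) := by
        rw [h1, h2]
        have : i + 1 - N = 1 + (i - N) := by ring
        rw [this, zpow_add_apply']
        simp
      rw [h4, dist_self]
      exact hδ
  obtain ⟨p, hp⟩ := hδsh z hpo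
  refine ⟨N, p, fun i hi => ?_⟩
  have := hp i
  rwa [show z i = x i from if_pos hi] at this

lemma backward_shadow (f : X ≃ₜ X) (hsh : ShadowingPropertyZ f.toEquiv) (x : ℤ → X)
    (hx : Tendsto (fun i : ℤ => dist (f.toEquiv (x i)) (x (i + 1))) cofinite (𝓝 0))
    {ε' : ℝ} (hε' : 0 < ε') :
    ∃ N : ℤ, ∃ q : X, ∀ i : ℤ, i ≤ N → dist ((f.toEquiv ^ i) q) (x i) < ε' := by
  obtain ⟨δ, hδ, hδsh⟩ := hsh ε' hε'
  obtain ⟨M, -, hM⟩ := tail_bounds hx hδ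
  set N : ℤ := -M with hNdef
  have hN : ∀ i : ℤ, i ≤ N → dist (f.toEquiv (x i)) (x (i + 1)) < δ := fun i hi => hM i hi
  set z : ℤ → X := fun i => if i ≤ N then x i else (f.toEquiv ^ (i - N)) (x N) with hz
  have hpo : ∀ i : ℤ, dist (f.toEquiv (z i)) (z (i + 1)) < δ := by
    intro i
    by_cases hi : i + 1 ≤ N
    · have h1 : z i = x i := if_pos (by omega)
      have h2 : z (i + 1) = x (i + 1) := if_pos hi
      rw [h1, h2]
      exact hN i (by omega)
    · have h2 : z (i + 1) = (f.toEquiv ^ (i + 1 - N)) (x N) := if_neg hi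
      have h4 : f.toEquiv (z i) = z (i + 1) := by
        by_cases hi2 : i ≤ N
        · have h3 : i = N := by omega
          rw [hz]
          simp only [if_pos hi2, h2, h3]
          simp
        · rw [show z i = (f.toEquiv ^ (i - N)) (x N) from if_neg hi2, h2]
          have : i + 1 - N = 1 + (i - N) := by ring
          rw [this, zpow_add_apply']
          simp
      rw [h4, dist_self]
      exact hδ
  obtain ⟨q, hq⟩ := hδsh z hpo
  refine ⟨N, q, fun i hi => ?_⟩
  have := hq i
  rwa [show z i = x i from if_pos hi] at this

lemma glue [CompactSpace X] (f : X ≃ₜ X) (hsp : SpecificationProperty f.toEquiv)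
    {ε : ℝ} (hε : 0 < ε) (p q : X) :
    ∃ y : X, (∀ t : ℤ, 0 ≤ t → dist ((f.toEquiv ^ t) y) ((f.toEquiv ^ t) p) ≤ ε) ∧
      ∃ K : ℤ, ∀ t : ℤ, t ≤ K → dist ((f.toEquiv ^ t) y) ((f.toEquiv ^ t) q) ≤ ε := by
  obtain ⟨L, hL⟩ := hsp ε hε
  set L' : ℤ := (L : ℤ) + 1 with hL'
  have hy : ∀ n : ℕ, ∃ y : X,
      (∀ t : ℤ, 0 ≤ t → t ≤ (n : ℤ) → dist ((f.toEquiv ^ t) y) ((f.toEquiv ^ t) p) < ε) ∧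
      (∀ t : ℤ, -(n : ℤ) - L' ≤ t → t ≤ -L' →
        dist ((f.toEquiv ^ t) y) ((f.toEquiv ^ t) q) < ε) := by
    intro n
    set P : ℤ → X := fun t => if t < 0 then (f.toEquiv ^ t) q else (f.toEquiv ^ t) p with hP
    have ha : ∀ i : Fin 2, (![-(n : ℤ) - L', 0] : Fin 2 → ℤ) i ≤ (![-L', (n : ℤ)] : Fin 2 → ℤ) i := by
      intro i
      fin_cases i <;> simp <;> omega
    have hb : ∀ i : Fin 1, (![-L', (n : ℤ)] : Fin 2 → ℤ) i.castSucc <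
        (![-(n : ℤ) - L', 0] : Fin 2 → ℤ) i.succ := by
      intro i
      fin_cases i
      simp
      omega
    have hc : ∀ i : Fin 1, (![-L', (n : ℤ)] : Fin 2 → ℤ) i.castSucc + (L : ℤ) ≤
        (![-(n : ℤ) - L', 0] : Fin 2 → ℤ) i.succ := by
      intro i
      fin_cases i
      simp
      omega
    have horb : ∀ i : Fin 2, ∀ t₁ ∈ Set.Icc ((![-(n : ℤ) - L', 0] : Fin 2 → ℤ) i)
        ((![-L', (n : ℤ)] : Fin 2 → ℤ) i), ∀ t₂ ∈ Set.Icc ((![-(n : ℤ) - L', 0] : Fin 2 → ℤ) i)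
        ((![-L', (n : ℤ)] : Fin 2 → ℤ) i), (f.toEquiv ^ (t₂ - t₁)) (P t₁) = P t₂ := by
      intro i
      fin_cases i <;> intro t₁ ht₁ t₂ ht₂ <;>
        simp only [Fin.zero_eta, Fin.mk_one, Matrix.cons_val_zero, Matrix.cons_val_one,
          Matrix.head_cons, Set.mem_Icc] at ht₁ ht₂ <;>
        obtain ⟨h1, h2⟩ := ht₁ <;> obtain ⟨h3, h4⟩ := ht₂
      · have e1 : t₁ < 0 := by omega
        have e2 : t₂ < 0 := by omega
        rw [hP]
        simp only [if_pos e1, if_pos e2]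
        rw [← zpow_add_apply', sub_add_cancel]
      · have e1 : ¬ t₁ < 0 := by omega
        have e2 : ¬ t₂ < 0 := by omega
        rw [hP]
        simp only [if_neg e1, if_neg e2]
        rw [← zpow_add_apply', sub_add_cancel]
    obtain ⟨y, hy⟩ := hL 1 (![-(n : ℤ) - L', 0]) (![-L', (n : ℤ)]) ha hb hc P horb
    refine ⟨y, fun t ht1 ht2 => ?_, fun t ht1 ht2 => ?_⟩
    · have h := hy 1 t (Set.mem_Icc.mpr
        ⟨by simp only [Matrix.cons_val_one, Matrix.head_cons, Matrix.cons_val_zero]; omega,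
         by simp only [Matrix.cons_val_one, Matrix.head_cons, Matrix.cons_val_zero]; omega⟩)
      simp only [P, if_neg (show ¬ t < 0 by omega)] at h
      exact h
    · have h := hy 0 t (Set.mem_Icc.mpr
        ⟨by simp only [Matrix.cons_val_zero]; omega,
         by simp only [Matrix.cons_val_zero]; omega⟩)
      simp only [P, if_pos (show t < 0 by omega)] at h
      exact h
  choose ys hys1 hys2 using hy
  obtain ⟨y, -, φ, hφ, hconv⟩ :=
    IsCompact.tendsto_subseq (isCompact_univ (X := X)) (fun n => Set.mem_univ (ys n))
  refine ⟨y, fun t ht => ?_, -L', fun t ht => ?_⟩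
  · have hlim : Tendsto (fun j => dist ((f.toEquiv ^ t) (ys (φ j))) ((f.toEquiv ^ t) p))
        atTop (𝓝 (dist ((f.toEquiv ^ t) y) ((f.toEquiv ^ t) p))) :=
      (((cont_zpow f t).tendsto y).comp hconv).dist tendsto_const_nhds
    refine le_of_tendsto hlim ?_
    filter_upwards [eventually_ge_atTop t.toNat] with j hj
    have h2 : t ≤ (φ j : ℤ) := by
      have h5 : j ≤ φ j := hφ.le_apply
      have := Int.self_le_toNat t
      omega
    exact (hys1 (φ j) t ht h2).le
  · have hlim : Tendsto (fun j => dist ((f.toEquiv ^ t) (ys (φ j))) ((f.toEquiv ^ t) q))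
        atTop (𝓝 (dist ((f.toEquiv ^ t) y) ((f.toEquiv ^ t) q))) :=
      (((cont_zpow f t).tendsto y).comp hconv).dist tendsto_const_nhds
    refine le_of_tendsto hlim ?_
    filter_upwards [eventually_ge_atTop (-t - L').toNat] with j hj
    have h2 : -(φ j : ℤ) - L' ≤ t := by
      have h5 : j ≤ φ j := hφ.le_apply
      have := Int.self_le_toNat (-t - L')
      omega
    exact (hys2 (φ j) t h2 ht).le

theorem aux_main [CompactSpace X] (f : X ≃ₜ X)
    (he : ∃ ε : ℝ, 0 < ε ∧ ∀ x y : X,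
      (∀ n : ℤ, dist ((f.toEquiv ^ n) x) ((f.toEquiv ^ n) y) ≤ ε) → x = y)
    (hsh : ShadowingPropertyZ f.toEquiv) (hsp : SpecificationProperty f.toEquiv) :
    ∀ x : ℤ → X, Tendsto (fun i : ℤ => dist (f.toEquiv (x i)) (x (i + 1))) cofinite (𝓝 0) →
    ∃ y : X, Tendsto (fun i : ℤ => dist ((f.toEquiv ^ i) y) (x i)) cofinite (𝓝 0) := by
  intro x hx
  obtain ⟨ε, hε, hexp⟩ := he
  have heps : ∀ k : ℕ, (0 : ℝ) < ε / (2 * ((k : ℝ) + 1)) := fun k => by positivity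
  choose N pk hpk using fun k : ℕ => forward_shadow f hsh x hx (heps k)
  choose M qk hqk using fun k : ℕ => backward_shadow f hsh x hx (heps k)
  have hhalf : ∀ k : ℕ, ε / (2 * ((k : ℝ) + 1)) ≤ ε / 2 := by
    intro k
    rw [div_le_div_iff₀ (by positivity) (by positivity)]
    nlinarith [hε.le, Nat.cast_nonneg (α := ℝ) k]
  have hsmall : ∀ c : ℝ, 0 < c → ∃ k : ℕ, ε / (2 * ((k : ℝ) + 1)) < c / 2 := by
    intro c hc
    obtain ⟨k, hk⟩ := exists_nat_gt (ε / c)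
    refine ⟨k, ?_⟩
    rw [div_lt_div_iff₀ (by positivity) (by positivity)]
    have h1 : ε / c < (k : ℝ) := hk
    have h2 : ε < c * (k : ℝ) := by
      have := (div_lt_iff₀ hc).mp h1
      linarith
    nlinarith [Nat.cast_nonneg (α := ℝ) k, hc.le]
  have hC1 : Tendsto (fun i : ℤ => dist ((f.toEquiv ^ i) (pk 0)) (x i)) atTop (𝓝 0) := by
    refine tendsto_zero_of_small (fun i => dist_nonneg) (fun c hc => ?_)
    obtain ⟨k, hk⟩ := hsmall c hc
    have hpair : ∀ i : ℤ, max (N 0) (N k) ≤ i →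
        dist ((f.toEquiv ^ i) (pk 0)) ((f.toEquiv ^ i) (pk k)) ≤ ε := by
      intro i hi
      have h1 := hpk 0 i (le_trans (le_max_left _ _) hi)
      have h2 := hpk k i (le_trans (le_max_right _ _) hi)
      have h3 := dist_triangle ((f.toEquiv ^ i) (pk 0)) (x i) ((f.toEquiv ^ i) (pk k))
      rw [dist_comm (x i)] at h3
      have h4 := hhalf 0
      have h5 := hhalf k
      simp only [Nat.cast_zero] at h4
      linarith
    have htd := asymp_forward f hε hexp (pk 0) (pk k) (max (N 0) (N k)) hpair
    filter_upwards [htd.eventually_lt_const (half_pos hc), eventually_ge_atTop (N k)]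
      with i h1 h2
    have h3 := hpk k i h2
    have h4 := dist_triangle ((f.toEquiv ^ i) (pk 0)) ((f.toEquiv ^ i) (pk k)) (x i)
    linarith
  have hC2 : Tendsto (fun i : ℤ => dist ((f.toEquiv ^ i) (qk 0)) (x i)) atBot (𝓝 0) := by
    refine tendsto_zero_of_small (fun i => dist_nonneg) (fun c hc => ?_)
    obtain ⟨k, hk⟩ := hsmall c hc
    have hpair : ∀ i : ℤ, i ≤ min (M 0) (M k) →
        dist ((f.toEquiv ^ i) (qk 0)) ((f.toEquiv ^ i) (qk k)) ≤ ε := by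
      intro i hi
      have h1 := hqk 0 i (le_trans hi (min_le_left _ _))
      have h2 := hqk k i (le_trans hi (min_le_right _ _))
      have h3 := dist_triangle ((f.toEquiv ^ i) (qk 0)) (x i) ((f.toEquiv ^ i) (qk k))
      rw [dist_comm (x i)] at h3
      have h4 := hhalf 0
      have h5 := hhalf k
      simp only [Nat.cast_zero] at h4
      linarith
    have htd := asymp_backward f hε hexp (qk 0) (qk k) (min (M 0) (M k)) hpair
    filter_upwards [htd.eventually_lt_const (half_pos hc), eventually_le_atBot (M k)]
      with i h1 h2
    have h3 := hqk k i h2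
    have h4 := dist_triangle ((f.toEquiv ^ i) (qk 0)) ((f.toEquiv ^ i) (qk k)) (x i)
    linarith
  obtain ⟨y, hyp, K, hyq⟩ := glue f hsp hε (pk 0) (qk 0)
  have hyp2 : Tendsto (fun t : ℤ => dist ((f.toEquiv ^ t) y) ((f.toEquiv ^ t) (pk 0)))
      atTop (𝓝 0) := asymp_forward f hε hexp y (pk 0) 0 hyp
  have hyq2 : Tendsto (fun t : ℤ => dist ((f.toEquiv ^ t) y) ((f.toEquiv ^ t) (qk 0)))
      atBot (𝓝 0) := asymp_backward f hε hexp y (qk 0) K hyq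
  refine ⟨y, ?_⟩
  rw [Int.cofinite_eq, Filter.tendsto_sup]
  constructor
  · refine squeeze_zero (fun i => dist_nonneg)
      (fun i => dist_triangle ((f.toEquiv ^ i) y) ((f.toEquiv ^ i) (qk 0)) (x i)) ?_
    simpa using hyq2.add hC2
  · refine squeeze_zero (fun i => dist_nonneg)
      (fun i => dist_triangle ((f.toEquiv ^ i) y) ((f.toEquiv ^ i) (pk 0)) (x i)) ?_
    simpa using hyp2.add hC1

/-- An expansive homeomorphism of a compact metric space with the shadowing and
specification properties has the two-sided limit shadowing property. -/
theorem stmt11 [CompactSpace X] (f : X ≃ₜ X) (he : Expansive f.toEquiv)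
    (hsh : ShadowingPropertyZ f.toEquiv) (hsp : SpecificationProperty f.toEquiv) :
    TwoSidedLimitShadowing f.toEquiv := by
  intro x hx
  exact aux_main f he hsh hsp x hx
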